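/- Let a > 0 and k ≥ 0 be real numbers, set C = 4√(2a)/(a(4 + k)), and define F : (0,∞) → ℝ by F(z) = 2∫₀ᶻ √(1 − (a/(a + t^{2+k}))²) dt. Then F(z) = C·z^{2+k/2} + o(z^{3+k/2}) as z → 0⁺; that is, (F(z) − C·z^{2+k/2})/z^{3+k/2} → 0 as z → 0⁺. -/

import Mathlib

open Real


lemma hxy_lem (a u : ℝ) (ha : 0 < a) :
    1 - (a / (a + u^2))^2 ≤ 2 * u^2 / a := by
  have hd : 0 < a + u^2 := by positivity
  rw [div_pow, sub_le_iff_le_add, div_add_div _ _ (ne_of_gt ha) (by positivity),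
    le_div_iff₀ (by positivity)]
  nlinarith [sq_nonneg u, sq_nonneg (u*u), sq_nonneg (u^2)]

lemma hL_lem (a : ℝ) (ha : 0 < a) : Real.sqrt (2/a) = Real.sqrt (2*a) / a := by
  rw [eq_div_iff (ne_of_gt ha),
    show Real.sqrt (2*a) = Real.sqrt ((2/a) * a^2) by congr 1; field_simp,
    Real.sqrt_mul (by positivity), Real.sqrt_sq ha.le]
  -- fix: nothing

lemma claimA (a u : ℝ) (ha : 0 < a) (hu : 0 ≤ u) :
    Real.sqrt (1 - (a / (a + u^2))^2) ≤ Real.sqrt (2/a) * u := by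
  have hsy : Real.sqrt (2*u^2/a) = Real.sqrt (2/a) * u := by
    rw [show 2*u^2/a = (2/a) * u^2 by ring, Real.sqrt_mul (by positivity),
      Real.sqrt_sq hu]
  rw [← hsy]
  exact Real.sqrt_le_sqrt (hxy_lem a u ha)

lemma claimB (a u : ℝ) (ha : 0 < a) (hu : 0 ≤ u) :
    Real.sqrt (2/a) * u - 5/(a * Real.sqrt (2*a)) * u^3 ≤
      Real.sqrt (1 - (a / (a + u^2))^2) := by
  rcases eq_or_lt_of_le hu with h | h
  · simp [← h]
  · have hd : 0 < a + u^2 := by positivity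
    have hx0 : 0 ≤ 1 - (a / (a + u^2))^2 := by
      have h1 : a / (a + u^2) ≤ 1 := by rw [div_le_one hd]; nlinarith
      have h0 : 0 ≤ a / (a + u^2) := by positivity
      nlinarith
    set x := 1 - (a / (a + u^2))^2 with hxdef
    have hxy := hxy_lem a u ha
    have hy : 0 < 2*u^2/a := by positivity
    have hsy : Real.sqrt (2*u^2/a) = Real.sqrt (2/a) * u := by
      rw [show 2*u^2/a = (2/a) * u^2 by ring, Real.sqrt_mul (by positivity),
        Real.sqrt_sq hu]
    have hsy0 : 0 < Real.sqrt (2*u^2/a) := Real.sqrt_pos.2 hy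
    -- step 1: √y - √x ≤ (y - x)/√y
    have h1 : Real.sqrt x ≤ Real.sqrt (2*u^2/a) := Real.sqrt_le_sqrt hxy
    have h2 : x ≤ Real.sqrt x * Real.sqrt (2*u^2/a) := by
      calc x = Real.sqrt x * Real.sqrt x := (Real.mul_self_sqrt hx0).symm
        _ ≤ Real.sqrt x * Real.sqrt (2*u^2/a) :=
            mul_le_mul_of_nonneg_left h1 (Real.sqrt_nonneg x)
    have key : Real.sqrt (2*u^2/a) - Real.sqrt x ≤ (2*u^2/a - x) / Real.sqrt (2*u^2/a) := by
      rw [le_div_iff₀ hsy0]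
      nlinarith [Real.sq_sqrt hy.le]
    -- step 2: (y - x)/√y ≤ M u³
    have hw : Real.sqrt (2*a) > 0 := Real.sqrt_pos.2 (by positivity)
    have hMs : 5/(a * Real.sqrt (2*a)) * Real.sqrt (2/a) = 5 / a^2 := by
      rw [hL_lem a ha]
      field_simp
    have hdiff : 2*u^2/a - x ≤ 5/a^2 * u^4 := by
      have hx_eq : x = (2*a*u^2 + u^4)/(a+u^2)^2 := by
        rw [hxdef]; field_simp; ring
      rw [hx_eq, div_sub_div _ _ (ne_of_gt ha) (by positivity),
        show 5/a^2*u^4 = 5*u^4/a^2 by ring,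
        div_le_div_iff₀ (by positivity) (by positivity)]
      nlinarith [mul_nonneg (mul_nonneg (mul_nonneg ha.le ha.le) ha.le) (pow_nonneg hu 4),
        mul_nonneg (mul_nonneg ha.le ha.le) (pow_nonneg hu 6),
        mul_nonneg ha.le (pow_nonneg hu 8)]
    have key2 : (2*u^2/a - x) / Real.sqrt (2*u^2/a) ≤ 5/(a * Real.sqrt (2*a)) * u^3 := by
      rw [div_le_iff₀ hsy0, hsy]
      calc 2*u^2/a - x ≤ 5/a^2 * u^4 := hdiff
        _ = 5/(a * Real.sqrt (2*a)) * u^3 * (Real.sqrt (2/a) * u) := by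
            rw [show 5/(a * Real.sqrt (2*a)) * u^3 * (Real.sqrt (2/a) * u)
              = 5/(a * Real.sqrt (2*a)) * Real.sqrt (2/a) * u^4 by ring, hMs]
    rw [← hsy]
    linarith

section helper
variable (a k : ℝ)

lemma rpow_cont (p : ℝ) (hp : 0 ≤ p) : Continuous fun t : ℝ => t ^ p :=
  continuous_iff_continuousAt.2 fun x => Real.continuousAt_rpow_const x p (Or.inr hp)

lemma integ_rpow (p z : ℝ) (hp : 0 ≤ p) (hz : 0 < z) :
    (∫ t in (0:ℝ)..z, t ^ p) = z ^ (p + 1) / (p + 1) := by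
  rw [integral_rpow (Or.inl (by linarith)), Real.zero_rpow (by positivity : p + 1 ≠ 0)]
  ring
end helper

/-- Let `a > 0` and `k ≥ 0` be real numbers, set
`C = 4√(2a) / (a(4+k))`, and define `F z = 2 * ∫ t in 0..z, √(1 - (a / (a + t^(2+k)))^2)`.
Then `F z = C * z^(2+k/2) + o(z^(3+k/2))` as `z → 0⁺`, i.e.
`(F z - C * z^(2+k/2)) / z^(3+k/2) → 0` as `z → 0⁺`. -/
theorem busemann_model_expansion (a k : ℝ) (ha : 0 < a) (hk : 0 ≤ k)
    (C : ℝ) (hC : C = 4 * Real.sqrt (2 * a) / (a * (4 + k)))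
    (F : ℝ → ℝ)
    (hF : ∀ z : ℝ, 0 < z →
      F z = 2 * ∫ t in (0 : ℝ)..z, Real.sqrt (1 - (a / (a + t ^ (2 + k))) ^ 2)) :
    Filter.Tendsto (fun z : ℝ => (F z - C * z ^ (2 + k / 2)) / z ^ (3 + k / 2))
      (nhdsWithin 0 (Set.Ioi 0)) (nhds 0) := by
  set L := Real.sqrt (2/a) with hLdef
  set M := 5 / (a * Real.sqrt (2*a)) with hMdef
  set K := 2 * M / (4 + 3*k/2) with hKdef
  have hM : 0 < M := by rw [hMdef]; positivity
  have hK : 0 < K := by rw [hKdef]; positivity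
  -- key two-sided bound for each z > 0
  have hbound : ∀ z : ℝ, 0 < z →
      -K * z ^ (1 + k) ≤ (F z - C * z ^ (2 + k/2)) / z ^ (3 + k/2) ∧
      (F z - C * z ^ (2 + k/2)) / z ^ (3 + k/2) ≤ 0 := by
    intro z hz
    have hzp : 0 < z ^ (3 + k/2) := Real.rpow_pos_of_pos hz _
    -- pointwise facts
    have hu2 : ∀ t : ℝ, 0 ≤ t → (t ^ (1 + k/2)) ^ 2 = t ^ (2 + k) := by
      intro t ht
      rw [← Real.rpow_natCast (t ^ (1 + k/2)) 2, ← Real.rpow_mul ht]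
      norm_num; ring_nf
    have hu3 : ∀ t : ℝ, 0 ≤ t → (t ^ (1 + k/2)) ^ 3 = t ^ (3 + 3*k/2) := by
      intro t ht
      rw [← Real.rpow_natCast (t ^ (1 + k/2)) 3, ← Real.rpow_mul ht]
      norm_num; ring_nf
    -- continuity / integrability
    have hc1 : Continuous fun t : ℝ => L * t ^ (1 + k/2) :=
      continuous_const.mul (rpow_cont _ (by linarith))
    have hc2 : Continuous fun t : ℝ => L * t ^ (1 + k/2) - M * t ^ (3 + 3*k/2) :=
      hc1.sub (continuous_const.mul (rpow_cont _ (by linarith)))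
    have hgc : ContinuousOn (fun t : ℝ => Real.sqrt (1 - (a / (a + t ^ (2 + k))) ^ 2))
        (Set.uIcc 0 z) := by
      apply Real.continuous_sqrt.comp_continuousOn
      apply ContinuousOn.sub continuousOn_const
      apply ContinuousOn.pow
      apply ContinuousOn.div continuousOn_const
      · exact (continuous_const.add (rpow_cont (2+k) (by linarith))).continuousOn
      · intro t ht
        rw [Set.uIcc_of_le hz.le] at ht
        have : 0 ≤ t ^ (2 + k) := Real.rpow_nonneg ht.1 _
        positivity
    have hgi : IntervalIntegrable (fun t : ℝ => Real.sqrt (1 - (a / (a + t ^ (2 + k))) ^ 2))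
        MeasureTheory.volume 0 z := hgc.intervalIntegrable
    -- pointwise bounds on [0, z]
    have hup : ∀ t ∈ Set.Icc (0:ℝ) z,
        Real.sqrt (1 - (a / (a + t ^ (2 + k))) ^ 2) ≤ L * t ^ (1 + k/2) := by
      intro t ht
      have := claimA a (t ^ (1 + k/2)) ha (Real.rpow_nonneg ht.1 _)
      rwa [hu2 t ht.1] at this
    have hlo : ∀ t ∈ Set.Icc (0:ℝ) z,
        L * t ^ (1 + k/2) - M * t ^ (3 + 3*k/2) ≤
          Real.sqrt (1 - (a / (a + t ^ (2 + k))) ^ 2) := by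
      intro t ht
      have := claimB a (t ^ (1 + k/2)) ha (Real.rpow_nonneg ht.1 _)
      rwa [hu2 t ht.1, hu3 t ht.1] at this
    -- integral values
    have hI1 : (∫ t in (0:ℝ)..z, L * t ^ (1 + k/2)) = L * (z ^ (2 + k/2) / (2 + k/2)) := by
      rw [intervalIntegral.integral_const_mul, integ_rpow _ z (by linarith) hz,
        show (1:ℝ) + k/2 + 1 = 2 + k/2 by ring]
    have hI2 : (∫ t in (0:ℝ)..z, L * t ^ (1 + k/2) - M * t ^ (3 + 3*k/2))
        = L * (z ^ (2 + k/2) / (2 + k/2)) - M * (z ^ (4 + 3*k/2) / (4 + 3*k/2)) := by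
      rw [intervalIntegral.integral_sub (g := fun t : ℝ => M * t ^ (3 + 3*k/2)) (hc1.intervalIntegrable 0 z)
        ((continuous_const.mul (rpow_cont (3+3*k/2) (by linarith))).intervalIntegrable 0 z),
        hI1, intervalIntegral.integral_const_mul, integ_rpow _ z (by linarith) hz,
        show (3:ℝ) + 3*k/2 + 1 = 4 + 3*k/2 by ring]
    -- the C identity
    have hCeq : C * z ^ (2 + k/2) = 2 * (L * (z ^ (2 + k/2) / (2 + k/2))) := by
      rw [hC, hLdef, hL_lem a ha]
      field_simp
      ring
    -- upper bound on F z
    have hFz := hF z hz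
    have hup' : F z ≤ C * z ^ (2 + k/2) := by
      rw [hFz, hCeq]
      have := intervalIntegral.integral_mono_on hz.le hgi (hc1.intervalIntegrable 0 z) hup
      rw [hI1] at this
      linarith
    have hlo' : C * z ^ (2 + k/2) - 2 * M * (z ^ (4 + 3*k/2) / (4 + 3*k/2)) ≤ F z := by
      rw [hFz, hCeq]
      have := intervalIntegral.integral_mono_on hz.le (hc2.intervalIntegrable 0 z) hgi hlo
      rw [hI2] at this
      linarith
    constructor
    · rw [le_div_iff₀ hzp]
      have hsplit : z ^ (4 + 3*k/2) = z ^ (3 + k/2) * z ^ (1 + k) := by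
        rw [← Real.rpow_add hz]; ring_nf
      have : -K * z ^ (1 + k) * z ^ (3 + k/2) = -(2 * M * (z ^ (4 + 3*k/2) / (4 + 3*k/2))) := by
        rw [hsplit, hKdef]
        field_simp
      rw [this]
      linarith
    · apply div_nonpos_of_nonpos_of_nonneg _ hzp.le
      linarith
  have hmem : ∀ᶠ z in nhdsWithin (0:ℝ) (Set.Ioi 0), z ∈ Set.Ioi (0:ℝ) :=
    eventually_mem_nhdsWithin
  refine tendsto_of_tendsto_of_tendsto_of_le_of_le'
    (g := fun z : ℝ => -K * z ^ (1 + k)) (h := fun _ : ℝ => (0:ℝ)) ?_ tendsto_const_nhds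
    (hmem.mono fun z hz => (hbound z hz).1) (hmem.mono fun z hz => (hbound z hz).2)
  have h1 : Filter.Tendsto (fun z : ℝ => z ^ (1 + k)) (nhdsWithin 0 (Set.Ioi 0)) (nhds 0) := by
    have := (Real.continuousAt_rpow_const 0 (1 + k) (Or.inr (by linarith))).tendsto
    rw [Real.zero_rpow (by positivity : (1:ℝ) + k ≠ 0)] at this
    exact this.mono_left nhdsWithin_le_nhds
  have := h1.const_mul (-K)
  simpa using this
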